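/- arXiv:1403.1494 — 2 statements merged into one kernel-verified Lean document; each statement's English description precedes it below -/
import Mathlib

section
/- For a connected unweighted graph G on n ≥ 3 vertices, ρ_ss(G) · σ(G) ≥ (n-1)/2, where σ(G) = max over distinct vertex pairs {i,j} of (d_i + d_j - |N(i) ∩ N(j)|), with equality when G = K_n. -/
open Matrix SimpleGraph Finset

/-- Performance measure: half the sum of reciprocals of the Laplacian eigenvalues
(the zero eigenvalue contributes `0⁻¹ = 0`). -/
noncomputable def rho {n : ℕ} (G : SimpleGraph (Fin n)) [DecidableRel G.Adj] : ℝ :=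
  (1/2) * ∑ i, ((G.posSemidef_lapMatrix ℝ).1.eigenvalues i)⁻¹

/-- `σ(G) = max_{i ≠ j} (d_i + d_j - |N(i) ∩ N(j)|)`. -/
noncomputable def sigmaG {n : ℕ} (G : SimpleGraph (Fin n)) [DecidableRel G.Adj] : ℝ :=
  sSup {x : ℝ | ∃ i j : Fin n, i ≠ j ∧
    x = (G.degree i : ℝ) + (G.degree j : ℝ)
        - ((G.neighborFinset i ∩ G.neighborFinset j).card : ℝ)}

/-- Key spectral bound: any nonzero eigenvalue of the Laplacian is at most
`d_i + d_j - |N(i) ∩ N(j)|` for some pair of distinct vertices. -/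
lemma eigen_le_pair {n : ℕ} (G : SimpleGraph (Fin n)) [DecidableRel G.Adj]
    {lam : ℝ} {x : Fin n → ℝ} (hx : x ≠ 0)
    (hL : G.lapMatrix ℝ *ᵥ x = lam • x) (hlam : lam ≠ 0) :
    ∃ i j : Fin n, i ≠ j ∧ lam ≤ (G.degree i : ℝ) + (G.degree j : ℝ)
        - ((G.neighborFinset i ∩ G.neighborFinset j).card : ℝ) := by
  have hne : (univ : Finset (Fin n)).Nonempty := by
    rcases Function.ne_iff.1 hx with ⟨k, -⟩
    exact ⟨k, mem_univ k⟩
  obtain ⟨i, -, hi⟩ := Finset.exists_max_image (univ : Finset (Fin n)) x hne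
  obtain ⟨j, -, hj⟩ := Finset.exists_min_image (univ : Finset (Fin n)) x hne
  have hLx : ∀ k, lam * x k = (G.degree k : ℝ) * x k - ∑ u ∈ G.neighborFinset k, x u := by
    intro k
    have := congrFun hL k
    rw [lapMatrix_mulVec_apply] at this
    simpa [Pi.smul_apply, smul_eq_mul] using this.symm
  have hij : x j < x i := by
    rcases lt_or_ge (x j) (x i) with h | h
    · exact h
    · exfalso
      have hconst : ∀ k, x k = x i := fun k =>
        le_antisymm (hi k (mem_univ k)) (h.trans (hj k (mem_univ k)))
      apply hx
      funext k
      have h1 := hLx k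
      have h2 : ∑ u ∈ G.neighborFinset k, x u = (G.degree k : ℝ) * x i := by
        rw [Finset.sum_congr rfl (fun u _ => hconst u), Finset.sum_const,
          card_neighborFinset_eq_degree, nsmul_eq_mul]
      rw [hconst k, h2] at h1
      have : lam * x k = 0 := by rw [hconst k]; linarith
      have := (mul_eq_zero.1 this).resolve_left hlam
      simpa using this
  have hijne : i ≠ j := fun h => absurd (h ▸ hij) (lt_irrefl _)
  refine ⟨i, j, hijne, ?_⟩
  set Ni := G.neighborFinset i
  set Nj := G.neighborFinset j
  have key : lam * (x i - x j) =
      ∑ u ∈ Ni, (x i - x u) + ∑ u ∈ Nj, (x u - x j) := by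
    have h1 := hLx i
    have h2 := hLx j
    have e1 : ∑ u ∈ Ni, (x i - x u) = (G.degree i : ℝ) * x i - ∑ u ∈ Ni, x u := by
      rw [Finset.sum_sub_distrib, Finset.sum_const, card_neighborFinset_eq_degree, nsmul_eq_mul]
    have e2 : ∑ u ∈ Nj, (x u - x j) = ∑ u ∈ Nj, x u - (G.degree j : ℝ) * x j := by
      rw [Finset.sum_sub_distrib, Finset.sum_const, card_neighborFinset_eq_degree, nsmul_eq_mul]
    rw [e1, e2]; ring_nf; linarith
  have hsplit1 : ∑ u ∈ Ni ∩ Nj, (x i - x u) + ∑ u ∈ Ni \ Nj, (x i - x u) = ∑ u ∈ Ni, (x i - x u) :=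
    Finset.sum_inter_add_sum_sdiff _ _ _
  have hsplit2 : ∑ u ∈ Nj ∩ Ni, (x u - x j) + ∑ u ∈ Nj \ Ni, (x u - x j) = ∑ u ∈ Nj, (x u - x j) :=
    Finset.sum_inter_add_sum_sdiff _ _ _
  have b1 : ∑ u ∈ Ni \ Nj, (x i - x u) ≤ ((Ni \ Nj).card : ℝ) * (x i - x j) := by
    rw [← nsmul_eq_mul]
    exact Finset.sum_le_card_nsmul _ _ _ (fun u _ => by
      have := hj u (mem_univ u); linarith)
  have b2 : ∑ u ∈ Nj \ Ni, (x u - x j) ≤ ((Nj \ Ni).card : ℝ) * (x i - x j) := by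
    rw [← nsmul_eq_mul]
    exact Finset.sum_le_card_nsmul _ _ _ (fun u _ => by
      have := hi u (mem_univ u); linarith)
  have b3 : ∑ u ∈ Ni ∩ Nj, (x i - x u) + ∑ u ∈ Nj ∩ Ni, (x u - x j)
      = ((Ni ∩ Nj).card : ℝ) * (x i - x j) := by
    rw [Finset.inter_comm Nj Ni, ← Finset.sum_add_distrib]
    rw [Finset.sum_congr rfl (fun u _ => by ring_nf :
      ∀ u ∈ Ni ∩ Nj, (x i - x u) + (x u - x j) = x i - x j)]
    rw [Finset.sum_const, nsmul_eq_mul]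
  have hc1 : ((Ni \ Nj).card : ℝ) = (G.degree i : ℝ) - ((Ni ∩ Nj).card : ℝ) := by
    rw [← Finset.sdiff_inter_self_left Ni Nj, Finset.cast_card_sdiff (Finset.inter_subset_left),
      card_neighborFinset_eq_degree]
  have hc2 : ((Nj \ Ni).card : ℝ) = (G.degree j : ℝ) - ((Ni ∩ Nj).card : ℝ) := by
    rw [← Finset.sdiff_inter_self_left Nj Ni, Finset.cast_card_sdiff (Finset.inter_subset_left),
      card_neighborFinset_eq_degree, Finset.inter_comm]
  have hfinal : lam * (x i - x j) ≤
      ((G.degree i : ℝ) + (G.degree j : ℝ) - ((Ni ∩ Nj).card : ℝ)) * (x i - x j) := by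
    rw [key, ← hsplit1, ← hsplit2]
    nlinarith [hc1, hc2, b1, b2, b3]
  have hpos : (0:ℝ) < x i - x j := by linarith
  exact le_of_mul_le_mul_right hfinal hpos

lemma sigma_bddAbove {n : ℕ} (G : SimpleGraph (Fin n)) [DecidableRel G.Adj] :
    BddAbove {x : ℝ | ∃ i j : Fin n, i ≠ j ∧
    x = (G.degree i : ℝ) + (G.degree j : ℝ)
        - ((G.neighborFinset i ∩ G.neighborFinset j).card : ℝ)} := by
  apply Set.Finite.bddAbove
  apply Set.Finite.subset (Set.finite_range (fun p : Fin n × Fin n =>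
    (G.degree p.1 : ℝ) + (G.degree p.2 : ℝ)
      - ((G.neighborFinset p.1 ∩ G.neighborFinset p.2).card : ℝ)))
  rintro x ⟨i, j, -, rfl⟩
  exact ⟨(i, j), rfl⟩

lemma card_nonzero_eigs {n : ℕ} (G : SimpleGraph (Fin n)) [DecidableRel G.Adj]
    (hG : G.Connected) :
    Fintype.card {i // (G.posSemidef_lapMatrix ℝ).1.eigenvalues i ≠ 0} = n - 1 := by
  rw [← (G.posSemidef_lapMatrix ℝ).1.rank_eq_card_non_zero_eigs]
  have hker : Module.finrank ℝ (LinearMap.ker (Matrix.toLin' (G.lapMatrix ℝ))) = 1 := by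
    rw [← G.card_connectedComponent_eq_finrank_ker_toLin'_lapMatrix]
    have : Subsingleton G.ConnectedComponent := hG.preconnected.subsingleton_connectedComponent
    have : Nonempty G.ConnectedComponent := ⟨G.connectedComponentMk ⟨0, Nat.pos_of_ne_zero (by
      rintro rfl; exact hG.nonempty.elim (fun v => v.elim0))⟩⟩
    exact Fintype.card_eq_one_iff.2 ⟨Classical.arbitrary _, fun y => Subsingleton.elim y _⟩
  have hrn := LinearMap.finrank_range_add_finrank_ker (Matrix.toLin' (G.lapMatrix ℝ))
  rw [hker] at hrn
  have hrank : (G.lapMatrix ℝ).rank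
      = Module.finrank ℝ (LinearMap.range (Matrix.toLin' (G.lapMatrix ℝ))) := by
    rw [Matrix.rank, Matrix.toLin'_apply']
  rw [hrank]
  have : Module.finrank ℝ (Fin n → ℝ) = n := by simp
  omega

lemma eigvec_ne_zero {n : ℕ} (G : SimpleGraph (Fin n)) [DecidableRel G.Adj] (i : Fin n) :
    ⇑((G.posSemidef_lapMatrix ℝ).1.eigenvectorBasis i) ≠ 0 := by
  intro h
  have h1 : ‖(G.posSemidef_lapMatrix ℝ).1.eigenvectorBasis i‖ = 1 :=
    (G.posSemidef_lapMatrix ℝ).1.eigenvectorBasis.orthonormal.1 i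
  have h2 : (G.posSemidef_lapMatrix ℝ).1.eigenvectorBasis i = 0 := by
    ext k
    exact congrFun h k
  rw [h2, norm_zero] at h1
  norm_num at h1

/-- Tradeoff `ρ_ss(G) σ(G) ≥ (n-1)/2`, with equality when `G = K_n`. -/
theorem stmt14 {n : ℕ} (hn : 3 ≤ n) (G : SimpleGraph (Fin n)) [DecidableRel G.Adj]
    (hG : G.Connected) :
    rho G * sigmaG G ≥ ((n : ℝ) - 1) / 2 ∧
    (G = ⊤ → rho G * sigmaG G = ((n : ℝ) - 1) / 2) := by
  have hA := (G.posSemidef_lapMatrix ℝ)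
  set eig : Fin n → ℝ := hA.1.eigenvalues with heig
  have hnneg : ∀ i, 0 ≤ eig i := hA.eigenvalues_nonneg
  have hle : ∀ i, eig i ≠ 0 → eig i ≤ sigmaG G := by
    intro i hi
    obtain ⟨a, b, hab, h⟩ := eigen_le_pair G (eigvec_ne_zero G i)
      (hA.1.mulVec_eigenvectorBasis i) hi
    exact h.trans (le_csSup (sigma_bddAbove G) ⟨a, b, hab, rfl⟩)
  have hcard : (univ.filter (fun i => eig i ≠ 0)).card = n - 1 := by
    rw [← Fintype.card_subtype]
    exact card_nonzero_eigs G hG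
  have hexists : ∃ i, eig i ≠ 0 := by
    have hpos : 0 < (univ.filter (fun i => eig i ≠ 0)).card := by rw [hcard]; omega
    obtain ⟨i, hi⟩ := Finset.card_pos.1 hpos
    exact ⟨i, (mem_filter.1 hi).2⟩
  obtain ⟨i0, hi0⟩ := hexists
  have hσpos : 0 < sigmaG G := lt_of_lt_of_le ((hnneg i0).lt_of_ne (Ne.symm hi0)) (hle i0 hi0)
  have hcast : ((n - 1 : ℕ) : ℝ) = (n : ℝ) - 1 := by
    rw [Nat.cast_sub (by omega)]; norm_num
  constructor
  · -- the inequality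
    have hsum : ((n:ℝ) - 1) * (sigmaG G)⁻¹ ≤ ∑ i, (eig i)⁻¹ := by
      have e1 : ∑ i, (if eig i ≠ 0 then (sigmaG G)⁻¹ else 0) = ((n:ℝ) - 1) * (sigmaG G)⁻¹ := by
        rw [← Finset.sum_filter, Finset.sum_const, hcard, nsmul_eq_mul, hcast]
      rw [← e1]
      apply Finset.sum_le_sum
      intro i _
      by_cases h : eig i = 0
      · simp [h]
      · simp only [h, ne_eq, not_false_eq_true, if_true]
        exact inv_anti₀ ((hnneg i).lt_of_ne (Ne.symm h)) (hle i h)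
    have h2 : ((n:ℝ) - 1) * (sigmaG G)⁻¹ * sigmaG G = (n:ℝ) - 1 := by
      field_simp
    have h3 : ((n:ℝ) - 1) * (sigmaG G)⁻¹ * sigmaG G ≤ (∑ i, (eig i)⁻¹) * sigmaG G :=
      mul_le_mul_of_nonneg_right hsum hσpos.le
    rw [h2] at h3
    rw [ge_iff_le, rho]
    nlinarith [h3]
  · -- equality for the complete graph
    intro hGtop
    subst hGtop
    -- neighborhoods and degrees in ⊤
    have hN : ∀ v : Fin n, (⊤ : SimpleGraph (Fin n)).neighborFinset v = univ.erase v := by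
      intro v
      ext u
      simp [Finset.mem_erase, ne_comm]
    have hdeg : ∀ v : Fin n, ((⊤ : SimpleGraph (Fin n)).degree v : ℝ) = (n : ℝ) - 1 := by
      intro v
      rw [← card_neighborFinset_eq_degree, hN v, Finset.card_erase_of_mem (mem_univ v),
        Finset.card_univ, Fintype.card_fin, hcast]
    have hinter : ∀ i j : Fin n, i ≠ j →
        (((⊤ : SimpleGraph (Fin n)).neighborFinset i ∩
          (⊤ : SimpleGraph (Fin n)).neighborFinset j).card : ℝ) = (n : ℝ) - 2 := by
      intro i j hij
      rw [hN i, hN j]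
      have : (univ.erase i) ∩ (univ.erase j) = (univ.erase i).erase j := by
        ext u; simp [Finset.mem_erase]; tauto
      rw [this, Finset.card_erase_of_mem (Finset.mem_erase.2 ⟨Ne.symm hij, mem_univ j⟩),
        Finset.card_erase_of_mem (mem_univ i), Finset.card_univ, Fintype.card_fin]
      rw [Nat.cast_sub (by omega), hcast]
      ring
    -- compute sigmaG ⊤ = n
    have hval : ∀ i j : Fin n, i ≠ j →
        ((⊤ : SimpleGraph (Fin n)).degree i : ℝ) + ((⊤ : SimpleGraph (Fin n)).degree j : ℝ)
          - (((⊤ : SimpleGraph (Fin n)).neighborFinset i ∩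
              (⊤ : SimpleGraph (Fin n)).neighborFinset j).card : ℝ) = (n : ℝ) := by
      intro i j hij
      rw [hdeg i, hdeg j, hinter i j hij]
      ring
    have h01 : (⟨0, by omega⟩ : Fin n) ≠ ⟨1, by omega⟩ := by
      simp [Fin.ext_iff]
    have hSset : {x : ℝ | ∃ i j : Fin n, i ≠ j ∧
        x = ((⊤ : SimpleGraph (Fin n)).degree i : ℝ) + ((⊤ : SimpleGraph (Fin n)).degree j : ℝ)
          - (((⊤ : SimpleGraph (Fin n)).neighborFinset i ∩
              (⊤ : SimpleGraph (Fin n)).neighborFinset j).card : ℝ)} = {(n : ℝ)} := by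
      ext x
      simp only [Set.mem_setOf_eq, Set.mem_singleton_iff]
      constructor
      · rintro ⟨i, j, hij, rfl⟩
        exact hval i j hij
      · rintro rfl
        exact ⟨_, _, h01, (hval _ _ h01).symm⟩
    have hσ : sigmaG (⊤ : SimpleGraph (Fin n)) = (n : ℝ) := by
      rw [sigmaG, hSset, csSup_singleton]
    -- eigenvalue dichotomy
    have hdich : ∀ i, eig i = 0 ∨ eig i = (n : ℝ) := by
      intro i
      by_cases h0 : eig i = 0
      · exact Or.inl h0
      right
      set x : Fin n → ℝ := ⇑(hA.1.eigenvectorBasis i) with hxdef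
      have hLx := hA.1.mulVec_eigenvectorBasis i
      have hkey : ∀ k, eig i * x k = (n : ℝ) * x k - ∑ u, x u := by
        intro k
        have := congrFun hLx k
        rw [lapMatrix_mulVec_apply] at this
        have hsum : ∑ u ∈ (⊤ : SimpleGraph (Fin n)).neighborFinset k, x u
            = ∑ u, x u - x k := by
          rw [hN k, Finset.sum_erase_eq_sub (mem_univ k)]
        rw [hsum, hdeg k] at this
        have : eig i * x k = ((n:ℝ) - 1) * x k - (∑ u, x u - x k) := by
          simpa [Pi.smul_apply, smul_eq_mul] using this.symm
        linarith
      have hS0 : ∑ u, x u = 0 := by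
        have hsumall : eig i * ∑ u, x u = (n : ℝ) * ∑ u, x u - n * ∑ u, x u := by
          rw [Finset.mul_sum, Finset.sum_congr rfl (fun k _ => hkey k)]
          rw [Finset.sum_sub_distrib, Finset.sum_const, ← Finset.mul_sum]
          simp [Finset.card_univ, mul_comm]
        have : eig i * ∑ u, x u = 0 := by linarith
        exact (mul_eq_zero.1 this).resolve_left h0
      obtain ⟨k, hk⟩ := Function.ne_iff.1 (eigvec_ne_zero (⊤ : SimpleGraph (Fin n)) i)
      have := hkey k
      rw [hS0] at this
      have hxk : x k ≠ 0 := by simpa using hk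
      have : (eig i - n) * x k = 0 := by linarith
      have := (mul_eq_zero.1 this).resolve_right hxk
      linarith
    -- sum of inverse eigenvalues
    have hsum : ∑ i, (eig i)⁻¹ = ((n:ℝ) - 1) * (n:ℝ)⁻¹ := by
      have e0 : ∑ i, (eig i)⁻¹ = ∑ i, (if eig i ≠ 0 then (n:ℝ)⁻¹ else 0) := by
        apply Finset.sum_congr rfl
        intro i _
        rcases hdich i with h | h
        · simp [h]
        · have hne : eig i ≠ 0 := by
            rw [h]; positivity
          rw [if_pos hne, h]
      rw [e0, ← Finset.sum_filter, Finset.sum_const, hcard, nsmul_eq_mul, hcast]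
    have hnne : (n : ℝ) ≠ 0 := by positivity
    rw [rho, hσ, hsum]
    field_simp
end

section
/- Let G be a connected graph whose edge set carries two weightings: susceptance weights b_e > 0 and conductance weights g_e = α_e b_e with α_e > 0. Then Tr(L_{G_b}^† L_{G_g}) = ∑_{e∈E} ν_e α_e where ν_e = r_e^{(G_b)} b_e and r_e^{(G_b)} is the effective resistance of edge e in the b-weighted graph; moreover ∑_{e∈E} ν_e = n - 1, so α_min (n-1) ≤ Tr(L_{G_b}^† L_{G_g}) ≤ α_max (n-1). -/
open Matrix SimpleGraph Finset

/-- Weighted Laplacian of a graph with edge weights `w`. -/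
noncomputable def glap {n : ℕ} (G : SimpleGraph (Fin n)) [DecidableRel G.Adj]
    (w : Sym2 (Fin n) → ℝ) : Matrix (Fin n) (Fin n) ℝ :=
  Matrix.of fun i j =>
    if i = j then ∑ k, (if G.Adj i k then w s(i, k) else 0)
    else if G.Adj i j then -w s(i, j) else 0

lemma glap_isHermitian {n : ℕ} (G : SimpleGraph (Fin n)) [DecidableRel G.Adj]
    (w : Sym2 (Fin n) → ℝ) : (glap G w).IsHermitian := by
  rw [Matrix.IsHermitian, conjTranspose_eq_transpose_of_trivial]
  ext i j
  simp only [glap, Matrix.transpose_apply, Matrix.of_apply]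
  by_cases h : i = j
  · subst h; simp
  · have h' : ¬ j = i := fun hh => h hh.symm
    rw [if_neg h', if_neg h]
    by_cases ha : G.Adj i j
    · rw [if_pos ha, if_pos (G.adj_comm i j |>.mp ha), Sym2.eq_swap]
    · rw [if_neg ha, if_neg (fun hh => ha ((G.adj_comm i j).mpr hh))]

/-- Eigenvalues of the weighted Laplacian. -/
noncomputable def wEig {n : ℕ} (G : SimpleGraph (Fin n)) [DecidableRel G.Adj]
    (w : Sym2 (Fin n) → ℝ) : Fin n → ℝ :=
  (glap_isHermitian G w).eigenvalues

/-- Performance measure of a weighted graph. -/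
noncomputable def wRho {n : ℕ} (G : SimpleGraph (Fin n)) [DecidableRel G.Adj]
    (w : Sym2 (Fin n) → ℝ) : ℝ :=
  (1/2) * ∑ i, (wEig G w i)⁻¹

/-- Effective-resistance quadratic form of an unordered pair. -/
noncomputable def effR {n : ℕ} (Lp : Matrix (Fin n) (Fin n) ℝ) (e : Sym2 (Fin n)) : ℝ :=
  Sym2.lift ⟨fun i j => Lp i i + Lp j j - Lp i j - Lp j i, fun i j => by ring⟩ e

section Helpers

variable {n : ℕ} (G : SimpleGraph (Fin n)) [DecidableRel G.Adj]

lemma glap_mulVec (w : Sym2 (Fin n) → ℝ) (x : Fin n → ℝ) (i : Fin n) :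
    (glap G w *ᵥ x) i = ∑ j, if G.Adj i j then w s(i, j) * (x i - x j) else 0 := by
  have key : ∀ j, glap G w i j * x j =
      (if j = i then (∑ k, if G.Adj i k then w s(i, k) else 0) * x i else 0)
        + (if G.Adj i j then -(w s(i, j) * x j) else 0) := by
    intro j
    by_cases h : i = j
    · subst h; simp [glap, G.irrefl]
    · have h' : ¬ (j = i) := fun hh => h hh.symm
      simp only [glap, Matrix.of_apply, if_neg h, if_neg h']
      by_cases ha : G.Adj i j
      · rw [if_pos ha, if_pos ha, zero_add]; ring
      · rw [if_neg ha, if_neg ha, zero_add, zero_mul]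
  have h0 : (glap G w *ᵥ x) i = ∑ j, glap G w i j * x j := rfl
  rw [h0]
  simp only [key, Finset.sum_add_distrib, Finset.sum_ite_eq' Finset.univ i]
  rw [if_pos (Finset.mem_univ i), Finset.sum_mul, ← Finset.sum_add_distrib]
  apply Finset.sum_congr rfl
  intro j _
  by_cases ha : G.Adj i j
  · rw [if_pos ha, if_pos ha, if_pos ha]; ring
  · rw [if_neg ha, if_neg ha, if_neg ha, add_zero, zero_mul]

lemma trace_mul_glap (M : Matrix (Fin n) (Fin n) ℝ) (w : Sym2 (Fin n) → ℝ) :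
    Matrix.trace (M * glap G w)
      = ∑ i, ∑ j, if G.Adj i j then w s(i, j) * (M i i - M i j) else 0 := by
  have h0 : Matrix.trace (M * glap G w) = ∑ i, ∑ j, M i j * glap G w j i := by
    simp [Matrix.trace, Matrix.mul_apply, Matrix.diag]
  rw [h0]
  apply Finset.sum_congr rfl
  intro i _
  have key : ∀ j, M i j * glap G w j i =
      (if j = i then M i i * (∑ k, if G.Adj i k then w s(i, k) else 0) else 0)
        + (if G.Adj i j then -(M i j * w s(i, j)) else 0) := by
    intro j
    by_cases h : j = i
    · subst h; simp [glap, G.irrefl]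
    · simp only [glap, Matrix.of_apply, if_neg h, if_neg (fun hh => h hh.symm : ¬ i = j)]
      simp only [G.adj_comm j i, Sym2.eq_swap]
      by_cases ha : G.Adj i j
      · rw [if_pos ha, if_pos ha, zero_add]; ring
      · rw [if_neg ha, if_neg ha, zero_add, mul_zero]
  simp only [key, Finset.sum_add_distrib, Finset.sum_ite_eq' Finset.univ i]
  rw [if_pos (Finset.mem_univ i), Finset.mul_sum, ← Finset.sum_add_distrib]
  apply Finset.sum_congr rfl
  intro j _
  by_cases ha : G.Adj i j
  · rw [if_pos ha, if_pos ha, if_pos ha]; ring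
  · rw [if_neg ha, if_neg ha, if_neg ha, add_zero, mul_zero]

lemma quad_glap (w : Sym2 (Fin n) → ℝ) (x : Fin n → ℝ) :
    x ⬝ᵥ (glap G w *ᵥ x)
      = ∑ i, ∑ j, if G.Adj i j then w s(i, j) * (x i * (x i - x j)) else 0 := by
  unfold dotProduct
  rw [Finset.sum_congr rfl (fun i (_ : i ∈ Finset.univ) => by
    rw [glap_mulVec, Finset.mul_sum])]
  apply Finset.sum_congr rfl
  intro i _
  apply Finset.sum_congr rfl
  intro j _
  by_cases ha : G.Adj i j
  · rw [if_pos ha, if_pos ha]; ring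
  · rw [if_neg ha, if_neg ha, mul_zero]

lemma dart_sum_eq_pair_sum (f : Fin n → Fin n → ℝ) :
    ∑ d : G.Dart, f d.fst d.snd = ∑ i, ∑ j, if G.Adj i j then f i j else 0 := by
  have h1 : ∑ p ∈ Finset.univ.filter (fun p : Fin n × Fin n => G.Adj p.1 p.2), f p.1 p.2
      = ∑ d : G.Dart, f d.fst d.snd := by
    refine Finset.sum_bij' (fun p hp => (⟨p, (Finset.mem_filter.mp hp).2⟩ : G.Dart))
      (fun d _ => d.toProd) (fun p hp => Finset.mem_univ _)
      (fun d _ => Finset.mem_filter.mpr ⟨Finset.mem_univ _, d.adj⟩)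
      (fun p hp => rfl) (fun d _ => rfl) (fun p hp => rfl)
  rw [← h1, Finset.sum_filter]
  rw [← Finset.univ_product_univ, Finset.sum_product]

lemma dart_sum_eq_edge_sum (f : Fin n → Fin n → ℝ) (F : Sym2 (Fin n) → ℝ)
    (hF : ∀ i j, G.Adj i j → f i j + f j i = F s(i, j)) :
    ∑ d : G.Dart, f d.fst d.snd = ∑ e ∈ G.edgeFinset, F e := by
  classical
  rw [← Finset.sum_fiberwise_of_maps_to (g := SimpleGraph.Dart.edge) (t := G.edgeFinset)
    (fun d _ => by rw [SimpleGraph.mem_edgeFinset]; exact d.edge_mem)]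
  apply Finset.sum_congr rfl
  intro e he
  rw [SimpleGraph.mem_edgeFinset] at he
  induction e with
  | _ u v =>
    have hadj : G.Adj u v := he
    let d : G.Dart := ⟨(u, v), hadj⟩
    have hde : d.edge = s(u, v) := rfl
    have hfib : (Finset.univ.filter fun d' : G.Dart => d'.edge = s(u, v)) = {d, d.symm} := by
      rw [← hde]; exact d.edge_fiber
    rw [hfib, Finset.sum_pair (d.symm_ne).symm]
    exact hF u v hadj

lemma pair_sum_eq_edge_sum (f : Fin n → Fin n → ℝ) (F : Sym2 (Fin n) → ℝ)
    (hF : ∀ i j, G.Adj i j → f i j + f j i = F s(i, j)) :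
    ∑ i, ∑ j, (if G.Adj i j then f i j else 0) = ∑ e ∈ G.edgeFinset, F e := by
  rw [← dart_sum_eq_pair_sum]
  exact dart_sum_eq_edge_sum G f F hF

/-- Trace formula: `Tr(M ⬝ L_w) = ∑_e w e * effR M e`. -/
lemma trace_mul_glap_edge (M : Matrix (Fin n) (Fin n) ℝ) (w : Sym2 (Fin n) → ℝ) :
    Matrix.trace (M * glap G w) = ∑ e ∈ G.edgeFinset, w e * effR M e := by
  rw [trace_mul_glap]
  apply pair_sum_eq_edge_sum
  intro i j hij
  rw [effR, Sym2.lift_mk]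
  have hsw : s(j, i) = s(i, j) := Sym2.eq_swap
  rw [hsw]
  ring

/-- Quadratic form as a sum over edges. -/
lemma quad_glap_edge (w : Sym2 (Fin n) → ℝ) (x : Fin n → ℝ) :
    x ⬝ᵥ (glap G w *ᵥ x)
      = ∑ e ∈ G.edgeFinset,
          w e * Sym2.lift ⟨fun i j => (x i - x j)^2, fun i j => by ring⟩ e := by
  rw [quad_glap]
  apply pair_sum_eq_edge_sum
  intro i j hij
  rw [Sym2.lift_mk]
  have hsw : s(j, i) = s(i, j) := Sym2.eq_swap
  rw [hsw]
  ring

lemma quad_glap_nonneg {b : Sym2 (Fin n) → ℝ} (hb : ∀ e ∈ G.edgeSet, 0 < b e)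
    (x : Fin n → ℝ) : 0 ≤ x ⬝ᵥ (glap G b *ᵥ x) := by
  rw [quad_glap_edge]
  apply Finset.sum_nonneg
  intro e he
  rw [SimpleGraph.mem_edgeFinset] at he
  apply mul_nonneg (le_of_lt (hb e he))
  induction e with
  | _ u v => rw [Sym2.lift_mk]; positivity

variable {G}

lemma ker_glap_const (hG : G.Connected) {b : Sym2 (Fin n) → ℝ}
    (hb : ∀ e ∈ G.edgeSet, 0 < b e) {x : Fin n → ℝ}
    (hx : glap G b *ᵥ x = 0) (i j : Fin n) : x i = x j := by
  have hq : x ⬝ᵥ (glap G b *ᵥ x) = 0 := by rw [hx]; simp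
  rw [quad_glap_edge] at hq
  have hterm : ∀ e ∈ G.edgeFinset,
      0 ≤ b e * Sym2.lift ⟨fun i j => (x i - x j)^2, fun i j => by ring⟩ e := by
    intro e he
    rw [SimpleGraph.mem_edgeFinset] at he
    apply mul_nonneg (le_of_lt (hb e he))
    induction e with
    | _ u v => simp only [Sym2.lift_mk]; positivity
  have hzero := (Finset.sum_eq_zero_iff_of_nonneg hterm).mp hq
  have hadj : ∀ u v, G.Adj u v → x u = x v := by
    intro u v huv
    have hmem : s(u, v) ∈ G.edgeFinset := by
      rw [SimpleGraph.mem_edgeFinset]; exact huv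
    have hz := hzero _ hmem
    rw [Sym2.lift_mk] at hz
    have hbpos := hb _ ((SimpleGraph.mem_edgeFinset).mp hmem)
    have h2 : (x u - x v)^2 = 0 := by
      rcases mul_eq_zero.mp hz with h | h
      · exact absurd h (ne_of_gt hbpos)
      · exact h
    have h3 := pow_eq_zero_iff (n := 2) (by norm_num) |>.mp h2
    linarith [sub_eq_zero.mp h3]
  obtain ⟨p⟩ := hG.preconnected i j
  induction p with
  | nil => rfl
  | cons h p ih => exact (hadj _ _ h).trans ih

lemma ker_glap_eq (hG : G.Connected) {b : Sym2 (Fin n) → ℝ}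
    (hb : ∀ e ∈ G.edgeSet, 0 < b e) (v0 : Fin n) :
    LinearMap.ker (glap G b).mulVecLin = ℝ ∙ (fun _ => (1 : ℝ) : Fin n → ℝ) := by
  ext x
  rw [LinearMap.mem_ker, Submodule.mem_span_singleton]
  constructor
  · intro hx
    refine ⟨x v0, ?_⟩
    funext i
    have := ker_glap_const hG hb (by rwa [Matrix.mulVecLin_apply] at hx) i v0
    simp [this]
  · rintro ⟨c, rfl⟩
    rw [Matrix.mulVecLin_apply]
    have hc : (c • (fun _ => (1:ℝ)) : Fin n → ℝ) = fun _ => c := by funext i; simp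
    rw [hc]
    funext i
    rw [glap_mulVec]
    simp

/-- Rank from a one-dimensional kernel. -/
lemma rank_of_ker_span_one {P : Matrix (Fin n) (Fin n) ℝ} (v0 : Fin n)
    (hker : LinearMap.ker P.mulVecLin = ℝ ∙ (fun _ => (1 : ℝ) : Fin n → ℝ)) :
    P.rank + 1 = n := by
  have hkr : Module.finrank ℝ (LinearMap.ker P.mulVecLin) = 1 := by
    rw [hker]
    apply finrank_span_singleton
    intro hc
    have := congrFun hc v0
    simp at this
  have hrn := LinearMap.finrank_range_add_finrank_ker P.mulVecLin
  rw [hkr] at hrn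
  rw [Matrix.rank, hrn]
  simp [Module.finrank_pi]

lemma trace_eq_sum_eigs {P : Matrix (Fin n) (Fin n) ℝ} (hP : P.IsHermitian) :
    P.trace = ∑ i, hP.eigenvalues i := by
  conv_lhs => rw [hP.spectral_theorem]
  rw [Unitary.conjStarAlgAut_apply, Matrix.trace_mul_cycle]
  have h1 : (star (hP.eigenvectorUnitary : Matrix (Fin n) (Fin n) ℝ))
      * (hP.eigenvectorUnitary : Matrix (Fin n) (Fin n) ℝ) = 1 := by
    exact Unitary.coe_star_mul_self _
  rw [h1, Matrix.one_mul, Matrix.trace_diagonal]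
  simp

lemma eig_idem {P : Matrix (Fin n) (Fin n) ℝ} (hP : P.IsHermitian)
    (hidem : P * P = P) (i : Fin n) :
    hP.eigenvalues i = 0 ∨ hP.eigenvalues i = 1 := by
  have hv := hP.mulVec_eigenvectorBasis i
  set μ := hP.eigenvalues i with hμ
  set v : Fin n → ℝ := ⇑(hP.eigenvectorBasis i) with hvdef
  have h2 : P *ᵥ (P *ᵥ v) = (μ * μ) • v := by
    rw [hv, Matrix.mulVec_smul, hv, smul_smul]
  rw [Matrix.mulVec_mulVec, hidem, hv] at h2
  have hvne : v ≠ 0 := by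
    have hne := hP.eigenvectorBasis.orthonormal.ne_zero i
    intro hc
    apply hne
    ext k
    exact congrFun hc k
  have h3 : (μ * μ - μ) • v = 0 := by
    rw [sub_smul, h2, sub_self]
  rcases smul_eq_zero.mp h3 with h | h
  · have hfac : μ * (μ - 1) = 0 := by ring_nf; ring_nf at h; linarith
    rcases mul_eq_zero.mp hfac with h' | h'
    · exact Or.inl h'
    · exact Or.inr (by linarith)
  · exact absurd h hvne

lemma trace_idem_eq_rank {P : Matrix (Fin n) (Fin n) ℝ} (hP : P.IsHermitian)
    (hidem : P * P = P) : P.trace = (P.rank : ℝ) := by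
  rw [trace_eq_sum_eigs hP, hP.rank_eq_card_non_zero_eigs]
  rw [Fintype.card_subtype, Finset.card_eq_sum_ones]
  push_cast
  rw [Finset.sum_filter]
  apply Finset.sum_congr rfl
  intro i _
  rcases eig_idem hP hidem i with h | h <;> simp [h]

/-- Symmetry of the pseudoinverse of a symmetric matrix. -/
lemma pinv_symm {A Lp : Matrix (Fin n) (Fin n) ℝ} (hAT : Aᵀ = A)
    (h1 : A * Lp * A = A) (h2 : Lp * A * Lp = Lp)
    (h3 : (A * Lp)ᵀ = A * Lp) (h4 : (Lp * A)ᵀ = Lp * A) : Lpᵀ = Lp := by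
  set Q := Lpᵀ with hQ
  have hAQ : A * Q = Lp * A := by
    calc A * Q = (Lp * Aᵀ)ᵀ := by rw [Matrix.transpose_mul, Matrix.transpose_transpose]
    _ = Lp * A := by rw [hAT]; exact h4
  have hQA : Q * A = A * Lp := by
    calc Q * A = (Aᵀ * Lp)ᵀ := by rw [Matrix.transpose_mul, Matrix.transpose_transpose]
    _ = A * Lp := by rw [hAT]; exact h3
  have hAQA : A * Q * A = A := by
    have ht : (A * Q * A)ᵀ = A := by
      rw [Matrix.transpose_mul, Matrix.transpose_mul, hAT, hQ, Matrix.transpose_transpose,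
        ← Matrix.mul_assoc, h1]
    calc A * Q * A = ((A * Q * A)ᵀ)ᵀ := by rw [Matrix.transpose_transpose]
    _ = Aᵀ := by rw [ht]
    _ = A := hAT
  have hQAQ : Q * A * Q = Q := by
    have ht : (Q * A * Q)ᵀ = Lp := by
      rw [Matrix.transpose_mul, Matrix.transpose_mul, hAT, hQ, Matrix.transpose_transpose,
        ← Matrix.mul_assoc, h2]
    calc Q * A * Q = ((Q * A * Q)ᵀ)ᵀ := by rw [Matrix.transpose_transpose]
    _ = Lpᵀ := by rw [ht]
  have hsAQ : (A * Q)ᵀ = A * Q := by rw [hAQ]; exact h4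
  have step1 : A * Lp = A * Q := by
    have e3 : (A * Lp) * (A * Q) = A * Q := by
      rw [← Matrix.mul_assoc (A*Lp) A Q, Matrix.mul_assoc A Lp A, ← Matrix.mul_assoc A Lp A, h1]
    calc A * Lp = (A * Q * A) * Lp := by rw [hAQA]
    _ = (A * Q) * (A * Lp) := by rw [Matrix.mul_assoc (A*Q) A Lp]
    _ = ((A * Lp) * (A * Q))ᵀ := by rw [Matrix.transpose_mul, hsAQ, h3]
    _ = (A * Q)ᵀ := by rw [e3]
    _ = A * Q := hsAQ
  have hsQA : (Q * A)ᵀ = Q * A := by rw [hQA]; exact h3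
  have step2 : Lp * A = Q * A := by
    have f3 : (Q * A) * (Lp * A) = Q * A := by
      rw [Matrix.mul_assoc Q A (Lp*A), ← Matrix.mul_assoc A Lp A, h1]
    calc Lp * A = Lp * (A * Q * A) := by rw [hAQA]
    _ = (Lp * A) * (Q * A) := by rw [Matrix.mul_assoc Lp A (Q*A), ← Matrix.mul_assoc A Q A]
    _ = ((Q * A) * (Lp * A))ᵀ := by rw [Matrix.transpose_mul, hsQA, h4]
    _ = (Q * A)ᵀ := by rw [f3]
    _ = Q * A := hsQA
  calc Lpᵀ = Q * A * Q := hQAQ.symm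
  _ = (Lp * A) * Q := by rw [← step2]
  _ = Lp * (A * Q) := by rw [Matrix.mul_assoc]
  _ = Lp * (A * Lp) := by rw [← step1]
  _ = Lp := by rw [← Matrix.mul_assoc, h2]

end Helpers

/-- Power-loss identity and bounds: with susceptances `b` and conductances `g = α·b`,
`Tr(L_b† L_g) = ∑_e ν_e α_e`, `∑_e ν_e = n - 1`, and
`α_min (n-1) ≤ Tr(L_b† L_g) ≤ α_max (n-1)`. Here `Lp` is the Moore–Penrose
pseudoinverse of `L_b`, characterized by the four Penrose conditions. -/
theorem stmt18 {n : ℕ} (G : SimpleGraph (Fin n)) [DecidableRel G.Adj] (hG : G.Connected)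
    (b a : Sym2 (Fin n) → ℝ)
    (hb : ∀ e ∈ G.edgeSet, 0 < b e) (ha : ∀ e ∈ G.edgeSet, 0 < a e)
    (Lp : Matrix (Fin n) (Fin n) ℝ)
    (h1 : glap G b * Lp * glap G b = glap G b)
    (h2 : Lp * glap G b * Lp = Lp)
    (h3 : (glap G b * Lp)ᵀ = glap G b * Lp)
    (h4 : (Lp * glap G b)ᵀ = Lp * glap G b)
    (hne : G.edgeFinset.Nonempty) :
    (Matrix.trace (Lp * glap G (fun e => a e * b e)) =
        ∑ e ∈ G.edgeFinset, (effR Lp e * b e) * a e) ∧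
    (∑ e ∈ G.edgeFinset, effR Lp e * b e = (n : ℝ) - 1) ∧
    (G.edgeFinset.inf' hne a * ((n : ℝ) - 1) ≤
        Matrix.trace (Lp * glap G (fun e => a e * b e)) ∧
      Matrix.trace (Lp * glap G (fun e => a e * b e)) ≤
        G.edgeFinset.sup' hne a * ((n : ℝ) - 1)) := by
  classical
  obtain ⟨e0, he0⟩ := id hne
  have u0 : Fin n := e0.out.1
  -- Part 1
  have part1 : Matrix.trace (Lp * glap G (fun e => a e * b e)) =
      ∑ e ∈ G.edgeFinset, (effR Lp e * b e) * a e := by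
    rw [trace_mul_glap_edge]
    apply Finset.sum_congr rfl
    intro e _
    ring
  -- symmetry of the Laplacian
  have hAT : (glap G b)ᵀ = glap G b := by
    have := glap_isHermitian G b
    rwa [Matrix.IsHermitian, conjTranspose_eq_transpose_of_trivial] at this
  -- `Lp * glap G b` is a symmetric idempotent with kernel equal to `ker (glap G b)`
  have hPherm : (Lp * glap G b).IsHermitian := by
    rw [Matrix.IsHermitian, conjTranspose_eq_transpose_of_trivial]
    exact h4
  have hPidem : (Lp * glap G b) * (Lp * glap G b) = Lp * glap G b := by
    rw [Matrix.mul_assoc Lp (glap G b) (Lp * glap G b),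
      ← Matrix.mul_assoc (glap G b) Lp (glap G b), h1]
  have hkerP : LinearMap.ker (Lp * glap G b).mulVecLin
      = LinearMap.ker (glap G b).mulVecLin := by
    ext x
    simp only [LinearMap.mem_ker, Matrix.mulVecLin_apply]
    constructor
    · intro hx
      have hrw : glap G b *ᵥ x = (glap G b * (Lp * glap G b)) *ᵥ x := by
        rw [← Matrix.mul_assoc, h1]
      rw [hrw, ← Matrix.mulVec_mulVec, hx, Matrix.mulVec_zero]
    · intro hx
      rw [← Matrix.mulVec_mulVec, hx, Matrix.mulVec_zero]
  have hker : LinearMap.ker (Lp * glap G b).mulVecLin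
      = ℝ ∙ (fun _ => (1 : ℝ) : Fin n → ℝ) := by
    rw [hkerP]; exact ker_glap_eq hG hb u0
  have hrank : (Lp * glap G b).rank + 1 = n := rank_of_ker_span_one u0 hker
  have htr : (Lp * glap G b).trace = (n : ℝ) - 1 := by
    rw [trace_idem_eq_rank hPherm hPidem]
    have hc : ((Lp * glap G b).rank : ℝ) + 1 = (n : ℝ) := by
      exact_mod_cast congrArg (Nat.cast : ℕ → ℝ) hrank
    linarith
  -- Part 2
  have part2 : ∑ e ∈ G.edgeFinset, effR Lp e * b e = (n : ℝ) - 1 := by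
    have t1 : Matrix.trace (Lp * glap G b) = ∑ e ∈ G.edgeFinset, b e * effR Lp e :=
      trace_mul_glap_edge G Lp b
    calc ∑ e ∈ G.edgeFinset, effR Lp e * b e
        = ∑ e ∈ G.edgeFinset, b e * effR Lp e := by
          apply Finset.sum_congr rfl; intro e _; ring
    _ = Matrix.trace (Lp * glap G b) := t1.symm
    _ = (n : ℝ) - 1 := htr
  -- ν is nonnegative
  have hLpT : Lpᵀ = Lp := pinv_symm hAT h1 h2 h3 h4
  have hpsd : ∀ x : Fin n → ℝ, 0 ≤ x ⬝ᵥ (Lp *ᵥ x) := by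
    intro x
    have hx : Lp *ᵥ x = Lp *ᵥ (glap G b *ᵥ (Lp *ᵥ x)) := by
      conv_rhs => rw [Matrix.mulVec_mulVec, Matrix.mulVec_mulVec, h2]
    rw [hx, Matrix.dotProduct_mulVec]
    have hv : x ᵥ* Lp = Lp *ᵥ x := by rw [← hLpT, Matrix.vecMul_transpose, hLpT]
    rw [hv]
    exact quad_glap_nonneg G hb (Lp *ᵥ x)
  have hnu : ∀ e ∈ G.edgeFinset, 0 ≤ effR Lp e * b e := by
    intro e he
    rw [SimpleGraph.mem_edgeFinset] at he
    apply mul_nonneg _ (le_of_lt (hb e he))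
    induction e with
    | _ u v =>
      set y : Fin n → ℝ := fun k => (if k = u then (1:ℝ) else 0) - (if k = v then 1 else 0)
        with hy
      have hdot : y ⬝ᵥ (Lp *ᵥ y) = Lp u u + Lp v v - Lp u v - Lp v u := by
        simp only [hy, dotProduct, Matrix.mulVec, sub_mul, mul_sub, ite_mul, mul_ite,
          one_mul, mul_one, zero_mul, mul_zero, Finset.sum_sub_distrib,
          Finset.sum_ite_eq' Finset.univ, Finset.mem_univ, if_pos]
        ring
      show 0 ≤ Lp u u + Lp v v - Lp u v - Lp v u
      rw [← hdot]
      exact hpsd y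
  -- bounds
  have hlow : G.edgeFinset.inf' hne a * ((n : ℝ) - 1) ≤
      Matrix.trace (Lp * glap G (fun e => a e * b e)) := by
    rw [part1, ← part2, Finset.mul_sum]
    apply Finset.sum_le_sum
    intro e he
    rw [mul_comm (G.edgeFinset.inf' hne a) (effR Lp e * b e)]
    exact mul_le_mul_of_nonneg_left (Finset.inf'_le a he) (hnu e he)
  have hhigh : Matrix.trace (Lp * glap G (fun e => a e * b e)) ≤
      G.edgeFinset.sup' hne a * ((n : ℝ) - 1) := by
    rw [part1, ← part2, Finset.mul_sum]
    apply Finset.sum_le_sum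
    intro e he
    rw [mul_comm (G.edgeFinset.sup' hne a) (effR Lp e * b e)]
    exact mul_le_mul_of_nonneg_left (Finset.le_sup' a he) (hnu e he)
  exact ⟨part1, part2, hlow, hhigh⟩
end
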